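/- If p is a very even partition of 2n (all parts even with even multiplicities), then n_v mod 4 distinguishes standard domino tableaux of shape p into exactly two nonempty classes: those with number of vertical dominoes ≡ 0 mod 4 and those with ≡ 2 mod 4; in particular, the number of vertical dominoes in any standard domino tableau of very even shape is even. -/

import Mathlib

open scoped Classical

/-- Two cells of a Young diagram are adjacent (horizontally or vertically). -/
def Adj (c d : ℕ × ℕ) : Prop :=
  (c.1 = d.1 ∧ (c.2 + 1 = d.2 ∨ d.2 + 1 = c.2)) ∨
  (c.2 = d.2 ∧ (c.1 + 1 = d.1 ∨ d.1 + 1 = c.1))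

/-- `c = (i, j)` is a cell of the Young diagram with row lengths `l`. -/
def Cell (l : List ℕ) (c : ℕ × ℕ) : Prop := c.2 < l.getD c.1 0

/-- A standard domino tableau with `n` dominoes: a shape (weakly decreasing list of
positive row lengths summing to `2n`) together with a labelling of its cells such that
each label `k ∈ {1,…,n}` occupies exactly two adjacent cells and the cells with labels
`≤ k` always form a Young diagram (a lower set). -/
structure SDT (n : ℕ) where
  shape : List ℕ
  sorted : shape.Pairwise (· ≥ ·)
  pos : ∀ x ∈ shape, 0 < x
  sum_eq : shape.sum = 2 * n
  label : ℕ × ℕ → ℕ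
  dominoes : ∀ k, 1 ≤ k → k ≤ n →
    ∃ c d : ℕ × ℕ, c ≠ d ∧ Adj c d ∧
      ∀ x, (Cell shape x ∧ label x = k) ↔ (x = c ∨ x = d)
  lower : ∀ k, IsLowerSet {x : ℕ × ℕ | Cell shape x ∧ label x ≤ k}

/-- The number of vertical dominoes of a standard domino tableau. -/
noncomputable def nVert {n : ℕ} (T : SDT n) : ℕ :=
  ((Finset.Icc 1 n).filter (fun k =>
    ∃ i j : ℕ, Cell T.shape (i + 1, j) ∧ T.label (i, j) = k ∧ T.label (i + 1, j) = k)).card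

/-- The parts of a partition as a weakly decreasing list. -/
def partList {N : ℕ} (p : N.Partition) : List ℕ := (p.parts.sort (· ≤ ·)).reverse

/-- The Young diagram with row lengths `l` admits a tiling by dominoes:
an adjacent-fixed-point-free pairing of its cells (empty 2-core). -/
def HasTiling (l : List ℕ) : Prop :=
  ∃ t : ℕ × ℕ → ℕ × ℕ, ∀ c, Cell l c →
    Cell l (t c) ∧ t (t c) = c ∧ t c ≠ c ∧ Adj c (t c)





/-- prefix sum -/
def ps (l : List ℕ) (i : ℕ) : ℕ := (l.take i).sum

lemma ps_succ (l : List ℕ) (i : ℕ) : ps l (i+1) = ps l i + l.getD i 0 := by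
  unfold ps
  rw [List.take_succ, List.sum_append]
  congr 1
  rcases h : l[i]? with _ | a
  · simp [List.getD, h]
  · simp [List.getD, h]

lemma ps_mono (l : List ℕ) {i j : ℕ} (h : i ≤ j) : ps l i ≤ ps l j := by
  induction j with
  | zero => simpa using h.antisymm (Nat.zero_le _) ▸ le_refl _
  | succ j ih =>
    rcases Nat.lt_or_ge i (j+1) with h' | h'
    · exact le_trans (ih (Nat.lt_succ_iff.mp h')) (by rw [ps_succ]; omega)
    · have : i = j + 1 := le_antisymm h h'
      rw [this]

lemma ps_even (l : List ℕ) (he : ∀ x ∈ l, Even x) (i : ℕ) : Even (ps l i) := by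
  rw [even_iff_two_dvd]
  apply List.dvd_sum
  intro x hx
  exact (he x (List.mem_of_mem_take hx)).two_dvd

lemma getD_anti {l : List ℕ} (hs : l.Pairwise (· ≥ ·)) {i j : ℕ} (h : i ≤ j) :
    l.getD j 0 ≤ l.getD i 0 := by
  rcases Nat.lt_or_ge j l.length with hj | hj
  · have hi : i < l.length := lt_of_le_of_lt h hj
    rw [List.getD_eq_getElem _ _ hj, List.getD_eq_getElem _ _ hi]
    rcases Nat.eq_or_lt_of_le h with rfl | hlt
    · exact le_refl _
    · exact List.pairwise_iff_getElem.mp hs i j hi hj hlt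
  · rw [List.getD_eq_default _ _ hj]; exact Nat.zero_le _

lemma find_window {l : List ℕ} {k : ℕ} (h : k < l.sum) :
    ∃ i, ps l i ≤ k ∧ k < ps l (i+1) := by
  induction l generalizing k with
  | nil => simp at h
  | cons a t ih =>
    rcases Nat.lt_or_ge k a with hk | hk
    · exact ⟨0, by simp [ps], by simpa [ps_succ, ps, List.getD] using hk⟩
    · obtain ⟨i, h1, h2⟩ := ih (k := k - a) (by simp at h; omega)
      refine ⟨i + 1, ?_, ?_⟩
      · have : ps (a :: t) (i+1) = a + ps t i := by
          unfold ps; simp [List.take_succ_cons]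
        omega
      · have : ps (a :: t) (i+1+1) = a + ps t (i+1) := by
          unfold ps; simp [List.take_succ_cons]
        omega

lemma window_unique {l : List ℕ} {i i' k : ℕ}
    (h1 : ps l i ≤ k) (h2 : k < ps l (i+1)) (h3 : ps l i' ≤ k) (h4 : k < ps l (i'+1)) :
    i = i' := by
  rcases Nat.lt_trichotomy i i' with h | h | h
  · have := ps_mono l (show i+1 ≤ i' by omega)
    omega
  · exact h
  · have := ps_mono l (show i'+1 ≤ i by omega)
    omega

lemma sum_range_getD (l : List ℕ) : ∑ i ∈ Finset.range l.length, l.getD i 0 = l.sum := by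
  induction l with
  | nil => simp
  | cons a t ih =>
    rw [List.length_cons, Finset.sum_range_succ']
    simp only [List.getD_cons_succ, List.getD_cons_zero, List.sum_cons]
    omega

noncomputable def cells (l : List ℕ) : Finset (ℕ × ℕ) :=
  (Finset.range l.length).biUnion (fun i => {i} ×ˢ Finset.range (l.getD i 0))

lemma mem_cells {l : List ℕ} {c : ℕ × ℕ} : c ∈ cells l ↔ Cell l c := by
  simp only [cells, Finset.mem_biUnion, Finset.mem_range, Finset.mem_product,
    Finset.mem_singleton]
  constructor
  · rintro ⟨i, hi, h1, h2⟩
    rw [← h1] at h2; exact h2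
  · intro h
    refine ⟨c.1, ?_, rfl, h⟩
    unfold Cell at h
    by_contra hc
    rw [List.getD_eq_default _ _ (Nat.le_of_not_lt hc)] at h
    exact Nat.not_lt_zero _ h

lemma card_cells (l : List ℕ) : (cells l).card = l.sum := by
  rw [cells, Finset.card_biUnion]
  · have : ∀ i ∈ Finset.range l.length, (({i} : Finset ℕ) ×ˢ Finset.range (l.getD i 0)).card = l.getD i 0 := by
      intro i _; simp
    rw [Finset.sum_congr rfl this]
    exact sum_range_getD l
  · intro i _ j _ hij
    simp only [Finset.disjoint_left, Finset.mem_product, Finset.mem_singleton]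
    rintro ⟨a, b⟩ ⟨h1, _⟩ ⟨h2, _⟩
    exact hij (h1 ▸ h2 ▸ rfl)


/-- The cell diagonally… cells decomposition by labels. -/
lemma cells_eq_biUnion {n : ℕ} (T : SDT n) :
    cells T.shape = (Finset.Icc 1 n).biUnion
      (fun k => (cells T.shape).filter (fun x => T.label x = k)) := by
  have hdisj : ∀ x ∈ Finset.Icc 1 n, ∀ y ∈ Finset.Icc 1 n, x ≠ y →
      Disjoint ((cells T.shape).filter (fun c => T.label c = x))
        ((cells T.shape).filter (fun c => T.label c = y)) := by
    intro x _ y _ hxy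
    simp only [Finset.disjoint_left, Finset.mem_filter]
    rintro c ⟨_, h1⟩ ⟨_, h2⟩
    exact hxy (h1 ▸ h2 ▸ rfl)
  symm
  apply Finset.eq_of_subset_of_card_le
  · intro x hx
    rw [Finset.mem_biUnion] at hx
    obtain ⟨k, _, hk⟩ := hx
    exact (Finset.mem_filter.mp hk).1
  · rw [Finset.card_biUnion hdisj, card_cells, T.sum_eq]
    have : ∀ k ∈ Finset.Icc 1 n,
        ((cells T.shape).filter (fun c => T.label c = k)).card = 2 := by
      intro k hk
      rw [Finset.mem_Icc] at hk
      obtain ⟨c, d, hne, _, hiff⟩ := T.dominoes k hk.1 hk.2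
      have : (cells T.shape).filter (fun c => T.label c = k) = {c, d} := by
        ext x
        simp only [Finset.mem_filter, mem_cells, Finset.mem_insert, Finset.mem_singleton]
        exact hiff x
      rw [this, Finset.card_pair hne]
    rw [Finset.sum_congr rfl this, Finset.sum_const, Nat.card_Icc]
    simp [Nat.mul_comm]
lemma domino_shape {n : ℕ} (T : SDT n) {k : ℕ} {c d : ℕ × ℕ} (hne : c ≠ d) (hadj : Adj c d)
    (hiff : ∀ x, (Cell T.shape x ∧ T.label x = k) ↔ (x = c ∨ x = d)) :
    ((∃ i j : ℕ, Cell T.shape (i + 1, j) ∧ T.label (i, j) = k ∧ T.label (i + 1, j) = k)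
      ↔ (c.2 = d.2 ∧ (c.1 + 1 = d.1 ∨ d.1 + 1 = c.1))) := by
  constructor
  · rintro ⟨i, j, hcell, hl1, hl2⟩
    have hcell' : Cell T.shape (i, j) := by
      have := getD_anti T.sorted (show i ≤ i + 1 by omega)
      unfold Cell at hcell ⊢
      simp only at hcell ⊢
      omega
    have h1 := (hiff (i, j)).mp ⟨hcell', hl1⟩
    have h2 := (hiff (i + 1, j)).mp ⟨hcell, hl2⟩
    rcases h1 with h1 | h1 <;> rcases h2 with h2 | h2
    · exfalso; rw [← h1] at h2; simp at h2
    · rw [← h1, ← h2]; exact ⟨rfl, Or.inl rfl⟩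
    · rw [← h1, ← h2]; exact ⟨rfl, Or.inr rfl⟩
    · exfalso; rw [← h1] at h2; simp at h2
  · rintro ⟨hcol, hrow | hrow⟩
    · have hd : (c.1 + 1, c.2) = d := by rw [hrow, hcol]
      have hcd : Cell T.shape d ∧ T.label d = k := (hiff d).mpr (Or.inr rfl)
      have hcc : Cell T.shape c ∧ T.label c = k := (hiff c).mpr (Or.inl rfl)
      exact ⟨c.1, c.2, hd ▸ hcd.1, hcc.2, hd ▸ hcd.2⟩
    · have hc : (d.1 + 1, d.2) = c := by rw [hrow, ← hcol]
      have hcd : Cell T.shape d ∧ T.label d = k := (hiff d).mpr (Or.inr rfl)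
      have hcc : Cell T.shape c ∧ T.label c = k := (hiff c).mpr (Or.inl rfl)
      exact ⟨d.1, d.2, hc ▸ hcc.1, hcd.2, hc ▸ hcc.2⟩

lemma nVert_even {n : ℕ} (T : SDT n) (he : ∀ x ∈ T.shape, Even x) : Even (nVert T) := by
  set l := T.shape with hl
  set E := (cells l).filter (fun c => Even c.1) with hE
  -- Step A : card E is even
  have hA : Even E.card := by
    have hdisj : ∀ x ∈ Finset.range l.length, ∀ y ∈ Finset.range l.length, x ≠ y →
        Disjoint ((({x} : Finset ℕ) ×ˢ Finset.range (l.getD x 0)).filter (fun c => Even c.1))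
          ((({y} : Finset ℕ) ×ˢ Finset.range (l.getD y 0)).filter (fun c => Even c.1)) := by
      intro x _ y _ hxy
      simp only [Finset.disjoint_left, Finset.mem_filter, Finset.mem_product,
        Finset.mem_singleton]
      rintro ⟨a, b⟩ ⟨⟨h1, _⟩, _⟩ ⟨⟨h2, _⟩, _⟩
      exact hxy (h1 ▸ h2 ▸ rfl)
    rw [hE, cells, Finset.filter_biUnion, Finset.card_biUnion hdisj]
    rw [even_iff_two_dvd]
    apply Finset.dvd_sum
    intro i hi
    by_cases hev : Even i
    · have : (({i} : Finset ℕ) ×ˢ Finset.range (l.getD i 0)).filter (fun c => Even c.1)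
          = ({i} : Finset ℕ) ×ˢ Finset.range (l.getD i 0) := by
        apply Finset.filter_true_of_mem
        rintro ⟨a, b⟩ hx
        simp only [Finset.mem_product, Finset.mem_singleton] at hx
        simpa [hx.1] using hev
      rw [this]
      simp only [Finset.card_product, Finset.card_singleton, Finset.card_range, one_mul]
      rw [Finset.mem_range] at hi
      rw [← even_iff_two_dvd]
      exact he _ (by rw [List.getD_eq_getElem _ _ hi]; exact List.getElem_mem hi)
    · have : (({i} : Finset ℕ) ×ˢ Finset.range (l.getD i 0)).filter (fun c => Even c.1)
          = ∅ := by
        apply Finset.filter_false_of_mem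
        rintro ⟨a, b⟩ hx
        simp only [Finset.mem_product, Finset.mem_singleton] at hx
        simpa [hx.1] using hev
      rw [this]
      simp
  -- Step B : card E ≡ nVert T mod 2
  have hB : (E.card : ZMod 2) = (nVert T : ZMod 2) := by
    have hdisj : ∀ x ∈ Finset.Icc 1 n, ∀ y ∈ Finset.Icc 1 n, x ≠ y →
        Disjoint (((cells l).filter (fun c => T.label c = x)).filter (fun c => Even c.1))
          (((cells l).filter (fun c => T.label c = y)).filter (fun c => Even c.1)) := by
      intro x _ y _ hxy
      simp only [Finset.disjoint_left, Finset.mem_filter]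
      rintro c ⟨⟨_, h1⟩, _⟩ ⟨⟨_, h2⟩, _⟩
      exact hxy (h1 ▸ h2 ▸ rfl)
    rw [hE, cells_eq_biUnion T, Finset.filter_biUnion, Finset.card_biUnion hdisj]
    push_cast
    rw [nVert]
    rw [← Finset.sum_boole (fun k =>
      ∃ i j : ℕ, Cell T.shape (i + 1, j) ∧ T.label (i, j) = k ∧ T.label (i + 1, j) = k)
      (Finset.Icc 1 n)]
    apply Finset.sum_congr rfl
    intro k hk
    rw [Finset.mem_Icc] at hk
    obtain ⟨c, d, hne, hadj, hiff⟩ := T.dominoes k hk.1 hk.2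
    have hDk : (cells l).filter (fun c => T.label c = k) = {c, d} := by
      ext x
      simp only [Finset.mem_filter, mem_cells, Finset.mem_insert, Finset.mem_singleton]
      exact hiff x
    rw [hDk]
    rw [if_congr (domino_shape T hne hadj hiff) rfl rfl]
    by_cases hv : c.2 = d.2 ∧ (c.1 + 1 = d.1 ∨ d.1 + 1 = c.1)
    · rw [if_pos hv]
      have hpar : (Even c.1 ∧ ¬ Even d.1) ∨ (¬ Even c.1 ∧ Even d.1) := by
        rcases hv.2 with h | h <;> rw [Nat.even_iff, Nat.even_iff] <;> omega
      rcases hpar with ⟨h1, h2⟩ | ⟨h1, h2⟩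
      · have : ({c, d} : Finset (ℕ × ℕ)).filter (fun x => Even x.1) = {c} := by
          ext x
          simp only [Finset.mem_filter, Finset.mem_insert, Finset.mem_singleton]
          constructor
          · rintro ⟨hx | hx, hx2⟩
            · exact hx
            · exact absurd (hx ▸ hx2) h2
          · rintro rfl; exact ⟨Or.inl rfl, h1⟩
        rw [this]; simp
      · have : ({c, d} : Finset (ℕ × ℕ)).filter (fun x => Even x.1) = {d} := by
          ext x
          simp only [Finset.mem_filter, Finset.mem_insert, Finset.mem_singleton]
          constructor
          · rintro ⟨hx | hx, hx2⟩
            · exact absurd (hx ▸ hx2) h1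
            · exact hx
          · rintro rfl; exact ⟨Or.inr rfl, h2⟩
        rw [this]; simp
    · rw [if_neg hv]
      have hrow : c.1 = d.1 := by
        rcases hadj with ⟨h, _⟩ | ⟨h1, h2⟩
        · exact h
        · exact absurd ⟨h1, h2⟩ hv
      by_cases hev : Even c.1
      · have : ({c, d} : Finset (ℕ × ℕ)).filter (fun x => Even x.1) = {c, d} := by
          apply Finset.filter_true_of_mem
          intro x hx
          rcases Finset.mem_insert.mp hx with rfl | hx
          · exact hev
          · rw [Finset.mem_singleton] at hx
            subst hx
            rw [← hrow]; exact hev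
        rw [this, Finset.card_pair hne]
        decide
      · have : ({c, d} : Finset (ℕ × ℕ)).filter (fun x => Even x.1) = ∅ := by
          apply Finset.filter_false_of_mem
          intro x hx
          rcases Finset.mem_insert.mp hx with rfl | hx
          · exact hev
          · rw [Finset.mem_singleton] at hx
            subst hx
            rw [← hrow]; exact hev
        rw [this]; simp
  rw [even_iff_two_dvd]
  rw [← ZMod.natCast_eq_zero_iff]
  rw [← hB, ZMod.natCast_eq_zero_iff, ← even_iff_two_dvd]
  exact hA
def label1 (l : List ℕ) (c : ℕ × ℕ) : ℕ := (ps l c.1 + c.2) / 2 + 1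

lemma label1_dominoes {l : List ℕ} (hs : l.Pairwise (· ≥ ·)) (he : ∀ x ∈ l, Even x)
    {n k : ℕ} (hsum : l.sum = 2 * n) (hk1 : 1 ≤ k) (hk2 : k ≤ n) :
    ∃ c d : ℕ × ℕ, c ≠ d ∧ Adj c d ∧
      ∀ x, (Cell l x ∧ label1 l x = k) ↔ (x = c ∨ x = d) := by
  have h2k : 2 * (k - 1) < l.sum := by omega
  obtain ⟨i, h1, h2⟩ := find_window h2k
  have hpsi := (ps_even l he i)
  have hpsi1 := (ps_even l he (i + 1))
  rw [Nat.even_iff] at hpsi hpsi1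
  have hsucc := ps_succ l i
  set m := 2 * (k - 1) - ps l i with hm
  refine ⟨(i, m), (i, m + 1), by simp, Or.inl ⟨rfl, Or.inl rfl⟩, ?_⟩
  rintro ⟨i', j'⟩
  unfold Cell label1
  simp only [Prod.mk.injEq]
  constructor
  · rintro ⟨hcell, hlab⟩
    have hpsi' := (ps_even l he i')
    rw [Nat.even_iff] at hpsi'
    have hsucc' := ps_succ l i'
    have hwin : ps l i' ≤ 2 * (k - 1) ∧ 2 * (k - 1) < ps l (i' + 1) := by omega
    have : i' = i := window_unique hwin.1 hwin.2 h1 h2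
    subst this
    omega
  · rintro (⟨rfl, rfl⟩ | ⟨rfl, rfl⟩) <;> constructor <;> omega

lemma label1_lower {l : List ℕ} (hs : l.Pairwise (· ≥ ·)) (k : ℕ) :
    IsLowerSet {x : ℕ × ℕ | Cell l x ∧ label1 l x ≤ k} := by
  rintro ⟨a, b⟩ ⟨a', b'⟩ hle ⟨hcell, hlab⟩
  rw [Prod.mk_le_mk] at hle
  have hanti := getD_anti hs hle.1
  constructor
  · unfold Cell at hcell ⊢
    simp only at hcell ⊢
    omega
  · unfold label1 at hlab ⊢
    simp only at hlab ⊢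
    have := ps_mono l hle.1
    have : ps l a' + b' ≤ ps l a + b := by omega
    have := Nat.div_le_div_right (c := 2) this
    omega

noncomputable def SDT1 (n : ℕ) (l : List ℕ) (hs : l.Pairwise (· ≥ ·)) (hp : ∀ x ∈ l, 0 < x)
    (he : ∀ x ∈ l, Even x) (hsum : l.sum = 2 * n) : SDT n where
  shape := l
  sorted := hs
  pos := hp
  sum_eq := hsum
  label := label1 l
  dominoes := fun k hk1 hk2 => label1_dominoes hs he hsum hk1 hk2
  lower := label1_lower hs

lemma nVert_SDT1 (n : ℕ) (l : List ℕ) (hs : l.Pairwise (· ≥ ·)) (hp : ∀ x ∈ l, 0 < x)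
    (he : ∀ x ∈ l, Even x) (hsum : l.sum = 2 * n) :
    nVert (SDT1 n l hs hp he hsum) = 0 := by
  rw [nVert, Finset.card_eq_zero, Finset.filter_eq_empty_iff]
  rintro k hk ⟨i, j, hcell, hl1, hl2⟩
  have h1 : (SDT1 n l hs hp he hsum).shape = l := rfl
  rw [h1] at hcell
  have hl12 : label1 l (i, j) = label1 l (i + 1, j) := by
    have e1 : (SDT1 n l hs hp he hsum).label = label1 l := rfl
    rw [e1] at hl1 hl2
    omega
  unfold Cell at hcell
  unfold label1 at hl12
  simp only at hcell hl12
  have hanti := getD_anti hs (show i ≤ i + 1 by omega)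
  have hsucc := ps_succ l i
  have hpsi := ps_even l he i
  have hpsi1 := ps_even l he (i + 1)
  rw [Nat.even_iff] at hpsi hpsi1
  omega

lemma partList_sorted {N : ℕ} (p : N.Partition) : (partList p).Pairwise (· ≥ ·) := by
  unfold partList
  rw [List.pairwise_reverse]
  exact Multiset.pairwise_sort p.parts (· ≤ ·)

lemma partList_mem {N : ℕ} {p : N.Partition} {x : ℕ} : x ∈ partList p ↔ x ∈ p.parts := by
  unfold partList
  rw [List.mem_reverse, Multiset.mem_sort]

lemma partList_sum {N : ℕ} (p : N.Partition) : (partList p).sum = N := by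
  unfold partList
  rw [List.sum_reverse]
  have h1 : ((p.parts.sort (· ≤ ·) : List ℕ) : Multiset ℕ).sum = (p.parts.sort (· ≤ ·)).sum :=
    Multiset.sum_coe _
  have h2 : ((p.parts.sort (· ≤ ·) : List ℕ) : Multiset ℕ).sum = p.parts.sum := by
    rw [Multiset.sort_eq]
  exact (h1.symm.trans h2).trans p.parts_sum

lemma partList_count {N : ℕ} (p : N.Partition) (a : ℕ) :
    (partList p).count a = p.parts.count a := by
  unfold partList
  rw [List.count_reverse]
  have h1 : ((p.parts.sort (· ≤ ·) : List ℕ) : Multiset ℕ).count a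
      = (p.parts.sort (· ≤ ·)).count a := Multiset.coe_count _ _
  have h2 : ((p.parts.sort (· ≤ ·) : List ℕ) : Multiset ℕ).count a = p.parts.count a := by
    rw [Multiset.sort_eq]
  exact (h1.symm.trans h2)

lemma partList_top {N : ℕ} (p : N.Partition) (hN : 0 < N)
    (heven : ∀ m ∈ p.parts, Even m)
    (hmult : ∀ m ∈ p.parts, Even (p.parts.count m)) :
    2 ≤ (partList p).getD 0 0 ∧ (partList p).getD 1 0 = (partList p).getD 0 0 := by
  have hsum : (partList p).sum = N := partList_sum p
  have hne : partList p ≠ [] := by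
    intro h
    rw [h] at hsum
    simp at hsum
    omega
  obtain ⟨a, t, hL⟩ := List.exists_cons_of_ne_nil hne
  have hamem : a ∈ p.parts := partList_mem.mp (hL ▸ List.mem_cons_self)
  have ha2 : 2 ≤ a := by
    have h1 := p.parts_pos hamem
    obtain ⟨c, hc⟩ := heven a hamem
    omega
  have hsorted : (a :: t).Pairwise (· ≥ ·) := hL ▸ partList_sorted p
  have hcount : (a :: t).count a = p.parts.count a := hL ▸ partList_count p a
  have hc2 : 2 ≤ (a :: t).count a := by
    obtain ⟨c, hc⟩ := hmult a hamem
    have h1 : 0 < (a :: t).count a := List.count_pos_iff.mpr (List.mem_cons_self)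
    omega
  have hat : a ∈ t := by
    rw [List.count_cons_self] at hc2
    exact List.count_pos_iff.mp (by omega)
  obtain ⟨b, t', rfl⟩ := List.exists_cons_of_ne_nil (show t ≠ [] by rintro rfl; simp at hat)
  have hba : b = a := by
    have h1 : a ≥ b := List.rel_of_pairwise_cons hsorted (List.mem_cons_self)
    rcases List.mem_cons.mp hat with rfl | hmem
    · rfl
    · have h2 : b ≥ a := List.rel_of_pairwise_cons hsorted.of_cons hmem
      omega
  subst hba
  rw [hL]
  exact ⟨ha2, rfl⟩
def label2 (l : List ℕ) (c : ℕ × ℕ) : ℕ :=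
  if c.1 ≤ 1 ∧ c.2 ≤ 1 then c.2 + 1
  else if c.1 = 0 then c.2 / 2 + 2
  else if c.1 = 1 then l.getD 0 0 / 2 + c.2 / 2 + 1
  else ps l c.1 / 2 + c.2 / 2 + 1

lemma getD_mod2 {l : List ℕ} (he : ∀ x ∈ l, Even x) (i : ℕ) : l.getD i 0 % 2 = 0 := by
  rcases Nat.lt_or_ge i l.length with h | h
  · rw [List.getD_eq_getElem _ _ h]
    rw [← Nat.even_iff]
    exact he _ (List.getElem_mem h)
  · rw [List.getD_eq_default _ _ h]

lemma label2_dominoes {l : List ℕ} (hs : l.Pairwise (· ≥ ·)) (he : ∀ x ∈ l, Even x)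
    {n k : ℕ} (hsum : l.sum = 2 * n) (h0 : 2 ≤ l.getD 0 0) (h11 : l.getD 1 0 = l.getD 0 0)
    (hk1 : 1 ≤ k) (hk2 : k ≤ n) :
    ∃ c d : ℕ × ℕ, c ≠ d ∧ Adj c d ∧
      ∀ x, (Cell l x ∧ label2 l x = k) ↔ (x = c ∨ x = d) := by
  have ha2 : l.getD 0 0 % 2 = 0 := getD_mod2 he 0
  have hps0 : ps l 0 = 0 := rfl
  have hps1 : ps l 1 = l.getD 0 0 := by
    have h := ps_succ l 0
    rw [show (0:ℕ)+1 = 1 from rfl] at h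
    omega
  have hps2 : ps l 2 = 2 * l.getD 0 0 := by
    have h := ps_succ l 1
    rw [show (1:ℕ)+1 = 2 from rfl, hps1, h11] at h
    omega
  by_cases hke1 : k = 1
  · subst hke1
    refine ⟨(0, 0), (1, 0), by intro hcd; rw [Prod.mk.injEq] at hcd; omega,
      Or.inr ⟨rfl, Or.inl rfl⟩, ?_⟩
    rintro ⟨i', j'⟩
    unfold Cell label2
    simp only [Prod.mk.injEq]
    constructor
    · rintro ⟨hcell, hlab⟩
      have hg := getD_anti hs (Nat.zero_le i')
      split_ifs at hlab with b1 b2 b3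
      · omega
      · omega
      · omega
      · have hi2 : 2 ≤ i' := by omega
        have h2 := ps_mono l hi2
        omega
    · rintro (⟨rfl, rfl⟩ | ⟨rfl, rfl⟩) <;> refine ⟨by omega, ?_⟩ <;> split_ifs <;> first | omega | exact False.elim (by assumption)
  · by_cases hke2 : k = 2
    · subst hke2
      refine ⟨(0, 1), (1, 1), by intro hcd; rw [Prod.mk.injEq] at hcd; omega,
        Or.inr ⟨rfl, Or.inl rfl⟩, ?_⟩
      rintro ⟨i', j'⟩
      unfold Cell label2
      simp only [Prod.mk.injEq]
      constructor
      · rintro ⟨hcell, hlab⟩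
        have hg := getD_anti hs (Nat.zero_le i')
        split_ifs at hlab with b1 b2 b3
        · omega
        · omega
        · omega
        · have hi2 : 2 ≤ i' := by omega
          have h2 := ps_mono l hi2
          omega
      · rintro (⟨rfl, rfl⟩ | ⟨rfl, rfl⟩) <;> refine ⟨by omega, ?_⟩ <;> split_ifs <;> first | omega | exact False.elim (by assumption)
    · by_cases hk3 : k ≤ l.getD 0 0 / 2 + 1
      · -- row 0 horizontal dominoes : 3 ≤ k ≤ a/2 + 1
        refine ⟨(0, 2 * k - 4), (0, 2 * k - 3), by intro hcd; rw [Prod.mk.injEq] at hcd; omega,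
          Or.inl ⟨rfl, Or.inl (by omega)⟩, ?_⟩
        rintro ⟨i', j'⟩
        unfold Cell label2
        simp only [Prod.mk.injEq]
        constructor
        · rintro ⟨hcell, hlab⟩
          have hg := getD_anti hs (Nat.zero_le i')
          split_ifs at hlab with b1 b2 b3
          · omega
          · omega
          · omega
          · have hi2 : 2 ≤ i' := by omega
            have h2 := ps_mono l hi2
            omega
        · rintro (⟨rfl, rfl⟩ | ⟨rfl, rfl⟩) <;> refine ⟨by omega, ?_⟩ <;> split_ifs <;> first | omega | exact False.elim (by assumption)
      · by_cases hk4 : k ≤ l.getD 0 0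
        · -- row 1 horizontal dominoes : a/2 + 2 ≤ k ≤ a
          refine ⟨(1, 2 * (k - l.getD 0 0 / 2) - 2), (1, 2 * (k - l.getD 0 0 / 2) - 1),
            by intro hcd; rw [Prod.mk.injEq] at hcd; omega,
            Or.inl ⟨rfl, Or.inl (by omega)⟩, ?_⟩
          rintro ⟨i', j'⟩
          unfold Cell label2
          simp only [Prod.mk.injEq]
          constructor
          · rintro ⟨hcell, hlab⟩
            have hg := getD_anti hs (Nat.zero_le i')
            split_ifs at hlab with b1 b2 b3
            · omega
            · omega
            · omega
            · have hi2 : 2 ≤ i' := by omega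
              have h2 := ps_mono l hi2
              omega
          · rintro (⟨rfl, rfl⟩ | ⟨rfl, rfl⟩) <;> refine ⟨by omega, ?_⟩ <;> split_ifs <;> first | omega | exact False.elim (by assumption)
        · -- general rows : k ≥ a + 1
          have h2k : 2 * (k - 1) < l.sum := by omega
          obtain ⟨i, hw1, hw2⟩ := find_window h2k
          have hi2 : 2 ≤ i := by
            rcases Nat.lt_or_ge i 2 with h | h
            · exfalso
              have := ps_mono l (show i + 1 ≤ 2 by omega)
              omega
            · exact h
          have hpei := ps_even l he i
          have hpei1 := ps_even l he (i + 1)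
          rw [Nat.even_iff] at hpei hpei1
          have hsucc := ps_succ l i
          set m := 2 * (k - 1) - ps l i with hm
          refine ⟨(i, m), (i, m + 1), by intro hcd; rw [Prod.mk.injEq] at hcd; omega,
            Or.inl ⟨rfl, Or.inl rfl⟩, ?_⟩
          rintro ⟨i', j'⟩
          unfold Cell label2
          simp only [Prod.mk.injEq]
          constructor
          · rintro ⟨hcell, hlab⟩
            have hg := getD_anti hs (Nat.zero_le i')
            split_ifs at hlab with b1 b2 b3
            · omega
            · omega
            · omega
            · have hi'2 : 2 ≤ i' := by omega
              have hpe' := ps_even l he i'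
              rw [Nat.even_iff] at hpe'
              have hsucc' := ps_succ l i'
              have hwin : ps l i' ≤ 2 * (k - 1) ∧ 2 * (k - 1) < ps l (i' + 1) := by omega
              have : i' = i := window_unique hwin.1 hwin.2 hw1 hw2
              subst this
              omega
          · rintro (⟨rfl, rfl⟩ | ⟨rfl, rfl⟩) <;> refine ⟨by omega, ?_⟩ <;>
              split_ifs <;> omega
lemma label2_mono {l : List ℕ} (hs : l.Pairwise (· ≥ ·)) (he : ∀ x ∈ l, Even x)
    (h0 : 2 ≤ l.getD 0 0) (h11 : l.getD 1 0 = l.getD 0 0)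
    {x y : ℕ × ℕ} (hle : y ≤ x) (hcx : Cell l x) : label2 l y ≤ label2 l x := by
  obtain ⟨i, j⟩ := x
  obtain ⟨i', j'⟩ := y
  rw [Prod.mk_le_mk] at hle
  unfold Cell at hcx
  simp only at hcx
  have ha2 : l.getD 0 0 % 2 = 0 := getD_mod2 he 0
  have hg1 : l.getD i 0 ≤ l.getD 0 0 := getD_anti hs (Nat.zero_le i)
  have hps0 : ps l 0 = 0 := rfl
  have hps1 : ps l 1 = l.getD 0 0 := by
    have h := ps_succ l 0
    rw [show (0:ℕ)+1 = 1 from rfl] at h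
    omega
  have hps2 : ps l 2 = 2 * l.getD 0 0 := by
    have h := ps_succ l 1
    rw [show (1:ℕ)+1 = 2 from rfl, hps1, h11] at h
    omega
  have hpm := ps_mono l hle.1
  unfold label2
  simp only
  rcases Nat.lt_or_ge i' 2 with hi' | hi'
  · rcases Nat.lt_or_ge i 2 with hi | hi
    · split_ifs <;> first | omega | exact False.elim (by assumption)
    · have hpm2 := ps_mono l hi
      split_ifs <;> first | omega | exact False.elim (by assumption)
  · have hi : 2 ≤ i := le_trans hi' hle.1
    have hpm2 := ps_mono l hi
    have hpm2' := ps_mono l hi'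
    split_ifs <;> first | omega | exact False.elim (by assumption)

lemma label2_lower {l : List ℕ} (hs : l.Pairwise (· ≥ ·)) (he : ∀ x ∈ l, Even x)
    (h0 : 2 ≤ l.getD 0 0) (h11 : l.getD 1 0 = l.getD 0 0) (k : ℕ) :
    IsLowerSet {x : ℕ × ℕ | Cell l x ∧ label2 l x ≤ k} := by
  rintro x y hle ⟨hcell, hlab⟩
  refine ⟨?_, le_trans (label2_mono hs he h0 h11 hle hcell) hlab⟩
  have := getD_anti hs hle.1
  unfold Cell at hcell ⊢
  rcases Prod.le_def.mp hle with ⟨h1, h2⟩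
  omega

noncomputable def SDT2 (n : ℕ) (l : List ℕ) (hs : l.Pairwise (· ≥ ·)) (hp : ∀ x ∈ l, 0 < x)
    (he : ∀ x ∈ l, Even x) (hsum : l.sum = 2 * n)
    (h0 : 2 ≤ l.getD 0 0) (h11 : l.getD 1 0 = l.getD 0 0) : SDT n where
  shape := l
  sorted := hs
  pos := hp
  sum_eq := hsum
  label := label2 l
  dominoes := fun k hk1 hk2 => label2_dominoes hs he hsum h0 h11 hk1 hk2
  lower := label2_lower hs he h0 h11

lemma nVert_SDT2 (n : ℕ) (l : List ℕ) (hs : l.Pairwise (· ≥ ·)) (hp : ∀ x ∈ l, 0 < x)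
    (he : ∀ x ∈ l, Even x) (hsum : l.sum = 2 * n)
    (h0 : 2 ≤ l.getD 0 0) (h11 : l.getD 1 0 = l.getD 0 0) :
    nVert (SDT2 n l hs hp he hsum h0 h11) = 2 := by
  have ha2 : l.getD 0 0 % 2 = 0 := getD_mod2 he 0
  have hps0 : ps l 0 = 0 := rfl
  have hps1 : ps l 1 = l.getD 0 0 := by
    have h := ps_succ l 0
    rw [show (0:ℕ)+1 = 1 from rfl] at h
    omega
  have hps2 : ps l 2 = 2 * l.getD 0 0 := by
    have h := ps_succ l 1
    rw [show (1:ℕ)+1 = 2 from rfl, hps1, h11] at h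
    omega
  have hsplit : l.sum = (l.take 2).sum + (l.drop 2).sum := by
    rw [← List.sum_append, List.take_append_drop]
  have hps2sum : ps l 2 ≤ l.sum := by unfold ps; omega
  have hn2 : 2 ≤ n := by omega
  have hshape : (SDT2 n l hs hp he hsum h0 h11).shape = l := rfl
  have hlabel : (SDT2 n l hs hp he hsum h0 h11).label = label2 l := rfl
  rw [nVert]
  have hset : (Finset.Icc 1 n).filter (fun k =>
      ∃ i j : ℕ, Cell (SDT2 n l hs hp he hsum h0 h11).shape (i + 1, j) ∧
        (SDT2 n l hs hp he hsum h0 h11).label (i, j) = k ∧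
        (SDT2 n l hs hp he hsum h0 h11).label (i + 1, j) = k) = {1, 2} := by
    ext k
    rw [Finset.mem_filter, Finset.mem_insert, Finset.mem_singleton, Finset.mem_Icc]
    rw [hshape, hlabel]
    constructor
    · rintro ⟨hk, i, j, hcell, hl1, hl2⟩
      unfold Cell at hcell
      simp only at hcell
      have hg := getD_anti hs (Nat.zero_le (i + 1))
      unfold label2 at hl1 hl2
      simp only at hl1 hl2
      rcases Nat.lt_or_ge i 2 with hi | hi
      · interval_cases i
        · simp only [Nat.reduceAdd] at hcell hl2 hg
          split_ifs at hl1 hl2 <;> first | omega | exact False.elim (by assumption)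
        · simp only [Nat.reduceAdd] at hcell hl2 hg
          split_ifs at hl1 hl2 <;> first | omega | exact False.elim (by assumption)
      · have hpe := ps_even l he i
        have hpe1 := ps_even l he (i + 1)
        rw [Nat.even_iff] at hpe hpe1
        have hsucc := ps_succ l i
        have hanti := getD_anti hs (show i ≤ i + 1 by omega)
        split_ifs at hl1 hl2 <;> first | omega | exact False.elim (by assumption)
    · have hc10 : Cell l (1, 0) := by unfold Cell; simp only; omega
      have hc11 : Cell l (1, 1) := by unfold Cell; simp only; omega
      rintro (rfl | rfl)
      · exact ⟨⟨le_refl 1, by omega⟩, 0, 0, hc10, by unfold label2; simp, by unfold label2; simp⟩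
      · exact ⟨⟨by omega, hn2⟩, 0, 1, hc11, by unfold label2; simp, by unfold label2; simp⟩
  rw [hset]
  rw [Finset.card_insert_of_notMem (by simp), Finset.card_singleton]

/-- If `p` is a very even partition of `2n` (all parts even, each with even
multiplicity), then every standard domino tableau of shape `p` has an even number of vertical
dominoes, and the residue of this number mod 4 splits such tableaux into exactly two nonempty
classes: those with `n_v ≡ 0 (mod 4)` and those with `n_v ≡ 2 (mod 4)`. -/
theorem very_even_vertical_domino_classes (n : ℕ) (hn : 0 < n) (p : (2 * n).Partition)
    (heven : ∀ m ∈ p.parts, Even m)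
    (hmult : ∀ m ∈ p.parts, Even (p.parts.count m)) :
    (∀ T : SDT n, T.shape = partList p → Even (nVert T)) ∧
    (∃ T : SDT n, T.shape = partList p ∧ nVert T % 4 = 0) ∧
    (∃ T : SDT n, T.shape = partList p ∧ nVert T % 4 = 2) := by
  have hsorted := partList_sorted p
  have hposl : ∀ x ∈ partList p, 0 < x := fun x hx => p.parts_pos (partList_mem.mp hx)
  have hevenl : ∀ x ∈ partList p, Even x := fun x hx => heven x (partList_mem.mp hx)
  have hsuml : (partList p).sum = 2 * n := partList_sum p
  obtain ⟨h0, h11⟩ := partList_top p (by omega) heven hmult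
  refine ⟨?_, ⟨SDT1 n _ hsorted hposl hevenl hsuml, rfl, by rw [nVert_SDT1]⟩,
    ⟨SDT2 n _ hsorted hposl hevenl hsuml h0 h11, rfl, by rw [nVert_SDT2]⟩⟩
  intro T hT
  exact nVert_even T (by rw [hT]; exact hevenl)
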